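/- arXiv:1206.2558 — 2 statements merged into one kernel-verified Lean document; each statement's English description precedes it below -/
import Mathlib

section
/- Let p,q ≥ 2 be coprime integers, n ≥ 1 an integer, and let τ be the tau function of Σ(p,q,pqn-1). Then for every integer k with 0 ≤ k ≤ g-2 and every integer i with nk ≤ i < nk + n, one has τ(M_{n(g-1)-1-i}) - τ(m_{n(g-1)-1-i}) = α_{g+k} and τ(M_{ng+i-1}) - τ(m_{ng+i}) = α_{g+k} (symmetry of branch lengths). -/
/-- The numerical semigroup `S_{p,q} = {ap + bq : a,b ∈ ℤ_{≥0}}`, as a set of integers. -/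
def Spq (p q : ℤ) : Set ℤ := {s | ∃ a b : ℤ, 0 ≤ a ∧ 0 ≤ b ∧ s = a * p + b * q}

/-- `Δ_j = 1 - j·e₀ - Σᵢ ⌈j·bᵢ/aᵢ⌉` for the Seifert data
`(e₀, (p,p'), (q,q'), (pqn-1, pqn-n-1))` with `e₀ = -2` of `Σ(p,q,pqn-1)`. -/
noncomputable def brieskornDelta (p q n p' q' : ℤ) (j : ℤ) : ℤ :=
  1 + 2 * j - (⌈(j * p' : ℚ) / (p : ℚ)⌉ + ⌈(j * q' : ℚ) / (q : ℚ)⌉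
    + ⌈(j * (p * q * n - n - 1) : ℚ) / (p * q * n - 1 : ℚ)⌉)

/-- The tau function `τ(k) = Σ_{j=0}^{k-1} Δ_j` of `Σ(p,q,pqn-1)`. -/
noncomputable def brieskornTau (p q n p' q' : ℤ) (k : ℤ) : ℤ :=
  ∑ j ∈ Finset.range k.toNat, brieskornDelta p q n p' q' (j : ℤ)

/-- `α_i = #{s ∈ ℤ_{≥0} : s ∉ S_{p,q}, s > i}`. -/
noncomputable def gapAlpha (p q i : ℤ) : ℕ :=
  Set.ncard {s : ℤ | 0 ≤ s ∧ s ∉ Spq p q ∧ i < s}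

/-! ### Auxiliary lemmas -/

lemma myFloorDiv (a b : ℤ) (hb : 0 < b) : ⌊(a:ℚ)/(b:ℚ)⌋ = a / b := by
  have h1 : ((b.toNat : ℕ) : ℤ) = b := Int.toNat_of_nonneg hb.le
  have h2 := Rat.floor_intCast_div_natCast a b.toNat
  rw [show ((b:ℚ)) = ((b.toNat : ℕ) : ℚ) by exact_mod_cast h1.symm, h2, h1]

lemma myCeilDiv (a b : ℤ) (hb : 0 < b) : ⌈(a:ℚ)/(b:ℚ)⌉ = -((-a)/b) := by
  have h : ((a:ℚ))/(b:ℚ) = -(((-a : ℤ):ℚ)/(b:ℚ)) := by push_cast; ring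
  rw [h, Int.ceil_neg, myFloorDiv _ _ hb]

lemma myEdiv (x d c m : ℤ) (hd : 0 < d) (hm0 : 0 ≤ m) (hmd : m < d) (hx : x = d*c + m) :
    x / d = c := by
  subst hx
  rw [show d*c + m = m + d*c by ring, Int.add_mul_ediv_left m c (by omega : d ≠ 0),
      Int.ediv_eq_zero_of_lt hm0 hmd]
  ring

lemma sum_Ico_split (f : ℤ → ℤ) (a b c : ℤ) (hab : a ≤ b) (hbc : b ≤ c) :
    ∑ j ∈ Finset.Ico a c, f j = ∑ j ∈ Finset.Ico a b, f j + ∑ j ∈ Finset.Ico b c, f j := by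
  rw [← Finset.Ico_union_Ico_eq_Ico hab hbc,
      Finset.sum_union (Finset.Ico_disjoint_Ico_consecutive a b c)]

lemma key_id (p q p' q' : ℤ) (hp : 2 ≤ p) (hq : 2 ≤ q) (hpq : IsCoprime p q)
    (hp'0 : 0 < p') (hp'p : p' < p) (hq'0 : 0 < q') (hq'q : q' < q)
    (hp' : q * p' ≡ 1 [ZMOD p]) (hq' : p * q' ≡ 1 [ZMOD q]) :
    p'*q + q'*p = p*q + 1 := by
  have h1 : (p:ℤ) ∣ 1 - q*p' := Int.ModEq.dvd hp'
  have h2 : (q:ℤ) ∣ 1 - p*q' := Int.ModEq.dvd hq'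
  obtain ⟨c, hc⟩ := h1
  obtain ⟨d, hd⟩ := h2
  have hdp : p ∣ (p'*q + q'*p - p*q - 1) := ⟨q' - q - c, by linear_combination (-1:ℤ)*hc⟩
  have hdq : q ∣ (p'*q + q'*p - p*q - 1) := ⟨p' - p - d, by linear_combination (-1:ℤ)*hd⟩
  obtain ⟨w, hw⟩ := hpq.mul_dvd hdp hdq
  have hb1 : q ≤ p'*q := by nlinarith
  have hb2 : p'*q ≤ (p-1)*q := by nlinarith
  have hb3 : p ≤ q'*p := by nlinarith
  have hb4 : q'*p ≤ (q-1)*p := by nlinarith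
  have hw0 : w = 0 := by
    rcases lt_trichotomy w 0 with h|h|h
    · have h5 : p*q*w ≤ p*q*(-1) := mul_le_mul_of_nonneg_left (by omega) (by positivity)
      nlinarith
    · exact h
    · have h5 : p*q*1 ≤ p*q*w := mul_le_mul_of_nonneg_left (by omega) (by positivity)
      nlinarith
  rw [hw0, mul_zero] at hw
  linarith

lemma keyF (p q p' q' : ℤ) (hp : 2 ≤ p) (hq : 2 ≤ q) (hpq : IsCoprime p q)
    (hkey : p'*q + q'*p = p*q + 1)
    (s : ℤ) (hs0 : 0 ≤ s) (hspq : s < p*q) :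
    (s ∈ Spq p q ∧ q * (s*p' % p) + p * (s*q' % q) = s + p*q*0) ∨
    (s ∉ Spq p q ∧ q * (s*p' % p) + p * (s*q' % q) = s + p*q*1) := by
  have hp0 : (0:ℤ) < p := by omega
  have hq0 : (0:ℤ) < q := by omega
  set A := s*p' % p with hA
  set B := s*q' % q with hB
  have hA0 : 0 ≤ A := Int.emod_nonneg _ (by omega)
  have hAp : A < p := Int.emod_lt_of_pos _ hp0
  have hB0 : 0 ≤ B := Int.emod_nonneg _ (by omega)
  have hBq : B < q := Int.emod_lt_of_pos _ hq0
  have ha1 : s*p' - A = p * (s*p'/p) := by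
    have := Int.mul_ediv_add_emod (s*p') p; linarith
  have hb1 : s*q' - B = q * (s*q'/q) := by
    have := Int.mul_ediv_add_emod (s*q') q; linarith
  have hdp : p ∣ q*A + p*B - s := ⟨-(q*(s*p'/p)) + B + s*(q - q'),
    by linear_combination (-q)*ha1 + s*hkey⟩
  have hdq : q ∣ q*A + p*B - s := ⟨-(p*(s*q'/q)) + A + s*(p - p'),
    by linear_combination (-p)*hb1 + s*hkey⟩
  obtain ⟨w, hw⟩ := hpq.mul_dvd hdp hdq
  have hub1 : q*A ≤ q*(p-1) := mul_le_mul_of_nonneg_left (by omega) (by omega)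
  have hub2 : p*B ≤ p*(q-1) := mul_le_mul_of_nonneg_left (by omega) (by omega)
  have hlb1 : 0 ≤ q*A := mul_nonneg (by omega) hA0
  have hlb2 : 0 ≤ p*B := mul_nonneg (by omega) hB0
  have hw01 : w = 0 ∨ w = 1 := by
    rcases lt_trichotomy w 0 with h|h|h
    · exfalso
      have h5 : p*q*w ≤ p*q*(-1) := mul_le_mul_of_nonneg_left (by omega) (by positivity)
      nlinarith
    · left; exact h
    · rcases lt_trichotomy w 1 with h'|h'|h'
      · omega
      · right; exact h'
      · exfalso
        have h5 : p*q*2 ≤ p*q*w := mul_le_mul_of_nonneg_left (by omega) (by positivity)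
        nlinarith
  rcases hw01 with rfl | rfl
  · left
    refine ⟨⟨B, A, hB0, hA0, by linarith⟩, by linarith⟩
  · right
    refine ⟨?_, by linarith⟩
    rintro ⟨a, b, ha, hb, rfl⟩
    have haq : a < q := by
      by_contra hcon
      push_neg at hcon
      have : p*q ≤ p*a := mul_le_mul_of_nonneg_left hcon (by omega)
      nlinarith [mul_nonneg hb (by omega : (0:ℤ) ≤ q)]
    have hbp : b < p := by
      by_contra hcon
      push_neg at hcon
      have : q*p ≤ q*b := mul_le_mul_of_nonneg_left hcon (by omega)
      nlinarith [mul_nonneg ha (by omega : (0:ℤ) ≤ p)]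
    have hA' : A = b := by
      rw [hA, show (a*p + b*q)*p' = b + p*(a*p' + b*(q - q')) by linear_combination b*hkey,
          Int.add_mul_emod_self_left, Int.emod_eq_of_lt hb hbp]
    have hB' : B = a := by
      rw [hB, show (a*p + b*q)*q' = a + q*(b*q' + a*(p - p')) by linear_combination a*hkey,
          Int.add_mul_emod_self_left, Int.emod_eq_of_lt ha haq]
    rw [hA', hB'] at hw
    nlinarith

lemma mem_of_ge (p q p' q' : ℤ) (hp : 2 ≤ p) (hq : 2 ≤ q) (hpq : IsCoprime p q)
    (hkey : p'*q + q'*p = p*q + 1) (s : ℤ) (hs : p*q ≤ s) : s ∈ Spq p q := by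
  have hpq0 : (0:ℤ) < p*q := by positivity
  set d := s / (p*q) with hdd
  set s0 := s % (p*q) with hs0'
  have h1 : p*q*d + s0 = s := Int.mul_ediv_add_emod s (p*q)
  have h00 : 0 ≤ s0 := Int.emod_nonneg _ (by omega)
  have h01 : s0 < p*q := Int.emod_lt_of_pos _ hpq0
  have hd1 : 1 ≤ d := by
    rcases le_or_gt 1 d with h|h
    · exact h
    · exfalso
      have : p*q*d ≤ p*q*0 := mul_le_mul_of_nonneg_left (by omega) (by positivity)
      nlinarith
  rcases keyF p q p' q' hp hq hpq hkey s0 h00 h01 with ⟨⟨a,b,ha,hb,hab⟩, _⟩ | ⟨_, hV⟩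
  · exact ⟨a + d*q, b, by nlinarith [mul_nonneg (by omega : (0:ℤ) ≤ d) (by omega : (0:ℤ) ≤ q)],
      hb, by linear_combination (-1:ℤ)*h1 + hab⟩
  · refine ⟨(s0*q' % q) + (d-1)*q, (s0*p' % p), ?_, Int.emod_nonneg _ (by omega), ?_⟩
    · have h2 : 0 ≤ s0*q' % q := Int.emod_nonneg _ (by omega)
      have h3 : 0 ≤ (d-1)*q := mul_nonneg (by omega) (by omega)
      linarith
    · linear_combination (-1:ℤ)*h1 - hV

lemma gap_le (p q p' q' : ℤ) (hp : 2 ≤ p) (hq : 2 ≤ q) (hpq : IsCoprime p q)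
    (hkey : p'*q + q'*p = p*q + 1) (s : ℤ) (hs0 : 0 ≤ s) (hs : s ∉ Spq p q) :
    s ≤ p*q - p - q := by
  rcases lt_or_ge s (p*q) with h1 | h1
  · rcases keyF p q p' q' hp hq hpq hkey s hs0 h1 with ⟨hmem, _⟩ | ⟨_, hV⟩
    · exact absurd hmem hs
    · have hp0 : (0:ℤ) < p := by omega
      have hq0 : (0:ℤ) < q := by omega
      have hA : s*p' % p ≤ p - 1 := by have := Int.emod_lt_of_pos (s*p') hp0; omega
      have hB : s*q' % q ≤ q - 1 := by have := Int.emod_lt_of_pos (s*q') hq0; omega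
      have h2 : q*(s*p' % p) ≤ q*(p-1) := mul_le_mul_of_nonneg_left hA (by omega)
      have h3 : p*(s*q' % q) ≤ p*(q-1) := mul_le_mul_of_nonneg_left hB (by omega)
      nlinarith
  · exact absurd (mem_of_ge p q p' q' hp hq hpq hkey s h1) hs

lemma eq_of_mul_bounds (p X w : ℤ) (hp : 0 < p) (h : X = p*w) (h1 : 0 < X) (h2 : X < 2*p) :
    X = p := by
  rcases lt_trichotomy w 1 with hw | rfl | hw
  · exfalso
    have : p*w ≤ p*0 := mul_le_mul_of_nonneg_left (by omega) hp.le
    simp at this; omega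
  · omega
  · exfalso
    have : p*2 ≤ p*w := mul_le_mul_of_nonneg_left (by omega) hp.le
    omega

lemma symm_gap (p q p' q' : ℤ) (hp : 2 ≤ p) (hq : 2 ≤ q) (hpq : IsCoprime p q)
    (hkey : p'*q + q'*p = p*q + 1)
    (s : ℤ) (hs0 : 0 ≤ s) (hs1 : s ≤ p*q - p - q) :
    (s ∈ Spq p q ↔ (p*q - p - q - s) ∉ Spq p q) := by
  have hp0 : (0:ℤ) < p := by omega
  have hq0 : (0:ℤ) < q := by omega
  set σ := p*q - p - q - s with hσ
  have hσ0 : 0 ≤ σ := by omega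
  have hσ1 : σ < p*q := by omega
  have hs1' : s < p*q := by omega
  have hAsum : s*p' % p + σ*p' % p = p - 1 := by
    have hA0 : 0 ≤ s*p' % p := Int.emod_nonneg _ (by omega)
    have hAp : s*p' % p < p := Int.emod_lt_of_pos _ hp0
    have hA0' : 0 ≤ σ*p' % p := Int.emod_nonneg _ (by omega)
    have hAp' : σ*p' % p < p := Int.emod_lt_of_pos _ hp0
    have ha1 : s*p' - s*p' % p = p * (s*p'/p) := by
      have := Int.mul_ediv_add_emod (s*p') p; linarith
    have ha2 : σ*p' - σ*p' % p = p * (σ*p'/p) := by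
      have := Int.mul_ediv_add_emod (σ*p') p; linarith
    have hdvd : s*p' % p + σ*p' % p + 1
        = p * (q*p' - p' - (q - q') - (s*p'/p) - (σ*p'/p)) := by
      rw [hσ] at ha2 ⊢
      linear_combination (-1:ℤ)*ha1 - ha2 - hkey
    have := eq_of_mul_bounds p (s*p' % p + σ*p' % p + 1) _ hp0 hdvd (by omega) (by omega)
    omega
  have hBsum : s*q' % q + σ*q' % q = q - 1 := by
    have hB0 : 0 ≤ s*q' % q := Int.emod_nonneg _ (by omega)
    have hBq : s*q' % q < q := Int.emod_lt_of_pos _ hq0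
    have hB0' : 0 ≤ σ*q' % q := Int.emod_nonneg _ (by omega)
    have hBq' : σ*q' % q < q := Int.emod_lt_of_pos _ hq0
    have hb1 : s*q' - s*q' % q = q * (s*q'/q) := by
      have := Int.mul_ediv_add_emod (s*q') q; linarith
    have hb2 : σ*q' - σ*q' % q = q * (σ*q'/q) := by
      have := Int.mul_ediv_add_emod (σ*q') q; linarith
    have hdvd : s*q' % q + σ*q' % q + 1
        = q * (p*q' - q' - (p - p') - (s*q'/q) - (σ*q'/q)) := by
      rw [hσ] at hb2 ⊢
      linear_combination (-1:ℤ)*hb1 - hb2 - hkey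
    have := eq_of_mul_bounds q (s*q' % q + σ*q' % q + 1) _ hq0 hdvd (by omega) (by omega)
    omega
  have hqA : q*(s*p' % p) + q*(σ*p' % p) = q*(p-1) := by
    rw [← mul_add, hAsum]
  have hpB : p*(s*q' % q) + p*(σ*q' % q) = p*(q-1) := by
    rw [← mul_add, hBsum]
  rcases keyF p q p' q' hp hq hpq hkey s hs0 hs1' with ⟨hsmem, hVs⟩ | ⟨hsmem, hVs⟩ <;>
    rcases keyF p q p' q' hp hq hpq hkey σ hσ0 hσ1 with ⟨hσmem, hVσ⟩ | ⟨hσmem, hVσ⟩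
  · exfalso
    have : p*q = 0 := by linear_combination hVs + hVσ - hqA - hpB
    nlinarith
  · exact ⟨fun _ => hσmem, fun _ => hsmem⟩
  · exact ⟨fun h => absurd h hsmem, fun h => absurd hσmem h⟩
  · exfalso
    have : p*q = 0 := by linear_combination -hVs - hVσ + hqA + hpB
    nlinarith

lemma delta_ediv (p q n p' q' j : ℤ) (hp : 0 < p) (hq : 0 < q) (hr : 0 < p*q*n - 1) :
    brieskornDelta p q n p' q' j =
      1 + 2*j + (-(j*p'))/p + (-(j*q'))/q + (-(j*(p*q*n - n - 1)))/(p*q*n-1) := by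
  have e1 : ⌈((j:ℚ) * (p':ℚ)) / (p:ℚ)⌉ = -((-(j*p'))/p) := by
    rw [show ((j:ℚ) * (p':ℚ)) = (((j*p' : ℤ)):ℚ) by push_cast; ring]
    exact myCeilDiv _ _ hp
  have e2 : ⌈((j:ℚ) * (q':ℚ)) / (q:ℚ)⌉ = -((-(j*q'))/q) := by
    rw [show ((j:ℚ) * (q':ℚ)) = (((j*q' : ℤ)):ℚ) by push_cast; ring]
    exact myCeilDiv _ _ hq
  have e3 : ⌈((j:ℚ) * ((p:ℚ)*(q:ℚ)*(n:ℚ) - (n:ℚ) - 1)) / ((p:ℚ)*(q:ℚ)*(n:ℚ) - 1)⌉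
      = -((-(j*(p*q*n - n - 1)))/(p*q*n - 1)) := by
    rw [show ((j:ℚ) * ((p:ℚ)*(q:ℚ)*(n:ℚ) - (n:ℚ) - 1)) = (((j*(p*q*n - n - 1) : ℤ)):ℚ) by
          push_cast; ring,
        show ((p:ℚ)*(q:ℚ)*(n:ℚ) - 1) = (((p*q*n - 1 : ℤ)):ℚ) by push_cast; ring]
    exact myCeilDiv _ _ hr
  unfold brieskornDelta
  rw [e1, e2, e3]
  ring

lemma delta_eval (p q n p' q' : ℤ) (hp : 2 ≤ p) (hq : 2 ≤ q) (hn : 1 ≤ n)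
    (hkey : p'*q + q'*p = p*q + 1)
    (t s W ε : ℤ)
    (hV : q * (s*p' % p) + p * (s*q' % q) = s + p*q*W)
    (hε0 : 0 ≤ t - s*n + ε*(p*q*n-1)) (hε1 : t - s*n + ε*(p*q*n-1) < p*q*n-1) :
    brieskornDelta p q n p' q' (p*q*t - s) = 1 - ε - W := by
  have hp0 : (0:ℤ) < p := by omega
  have hq0 : (0:ℤ) < q := by omega
  have hr0 : (0:ℤ) < p*q*n - 1 := by nlinarith
  rw [delta_ediv p q n p' q' (p*q*t - s) hp0 hq0 hr0]
  set A := s*p' % p with hA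
  set B := s*q' % q with hB
  have hA0 : 0 ≤ A := Int.emod_nonneg _ (by omega)
  have hAp : A < p := Int.emod_lt_of_pos _ hp0
  have hB0 : 0 ≤ B := Int.emod_nonneg _ (by omega)
  have hBq : B < q := Int.emod_lt_of_pos _ hq0
  have ha1 : s*p' - A = p * (s*p'/p) := by
    have := Int.mul_ediv_add_emod (s*p') p; linarith
  have hb1 : s*q' - B = q * (s*q'/q) := by
    have := Int.mul_ediv_add_emod (s*q') q; linarith
  have hu1 : (-((p*q*t - s)*p'))/p = s*p'/p - q*t*p' := by
    refine myEdiv _ _ _ A hp0 hA0 hAp ?_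
    linear_combination ha1
  have hu2 : (-((p*q*t - s)*q'))/q = s*q'/q - p*t*q' := by
    refine myEdiv _ _ _ B hq0 hB0 hBq ?_
    linear_combination hb1
  have hu3 : (-((p*q*t - s)*(p*q*n - n - 1)))/(p*q*n-1) = t - (p*q*t - s) - ε := by
    refine myEdiv _ _ _ (t - s*n + ε*(p*q*n-1)) hr0 hε0 hε1 ?_
    ring
  rw [hu1, hu2, hu3]
  have hX : p*q*((p*q*t - s) + t + (s*p'/p - q*t*p') + (s*q'/q - p*t*q') + W) = 0 := by
    linear_combination (-q)*ha1 + (-p)*hb1 - hV + (s - p*q*t)*hkey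
  have hpqne : (p*q : ℤ) ≠ 0 := by positivity
  have hXX := (mul_eq_zero.mp hX).resolve_left hpqne
  linarith

open Classical in
noncomputable def chiG (p q : ℤ) (s : ℤ) : ℤ := if s ∈ Spq p q then 0 else 1

open Classical in
noncomputable def chiS (p q : ℤ) (s : ℤ) : ℤ := if s ∈ Spq p q then 1 else 0

lemma chiG_mem {p q s : ℤ} (h : s ∈ Spq p q) : chiG p q s = 0 := by simp [chiG, h]
lemma chiG_not {p q s : ℤ} (h : s ∉ Spq p q) : chiG p q s = 1 := by simp [chiG, h]
lemma chiS_mem {p q s : ℤ} (h : s ∈ Spq p q) : chiS p q s = 1 := by simp [chiS, h]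
lemma chiS_not {p q s : ℤ} (h : s ∉ Spq p q) : chiS p q s = 0 := by simp [chiS, h]

lemma tau_diff (p q n p' q' a b : ℤ) (h0 : 0 ≤ a) (hab : a ≤ b) :
    brieskornTau p q n p' q' b - brieskornTau p q n p' q' a
      = ∑ j ∈ Finset.Ico a b, brieskornDelta p q n p' q' j := by
  have h1 : ∀ c : ℤ, brieskornTau p q n p' q' c
      = ∑ j ∈ Finset.Ico (0:ℤ) c, brieskornDelta p q n p' q' j := by
    intro c
    unfold brieskornTau
    rw [Finset.range_eq_Ico]
    refine Finset.sum_nbij' (fun (x:ℕ) => (x:ℤ)) (fun x => x.toNat) ?_ ?_ ?_ ?_ ?_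
    · intro a ha; simp only [Finset.mem_Ico] at *; omega
    · intro a ha; simp only [Finset.mem_Ico] at *; omega
    · intro a ha; simp
    · intro a ha; simp only [Finset.mem_Ico] at ha; omega
    · intro a ha; rfl
  rw [h1 a, h1 b, sum_Ico_split _ 0 a b h0 hab]
  ring

lemma sum_reflect (f : ℤ → ℤ) (c lo hi : ℤ) :
    ∑ j ∈ Finset.Ico lo hi, f j = ∑ s ∈ Finset.Ico (c - hi + 1) (c - lo + 1), f (c - s) := by
  refine Finset.sum_nbij' (fun j => c - j) (fun s => c - s) ?_ ?_ ?_ ?_ ?_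
  · intro a ha; simp only [Finset.mem_Ico] at *; omega
  · intro a ha; simp only [Finset.mem_Ico] at *; omega
  · intro a ha; omega
  · intro a ha; omega
  · intro a ha; congr 1; omega

lemma alpha_card (p q p' q' g k : ℤ) (hp : 2 ≤ p) (hq : 2 ≤ q) (hpq : IsCoprime p q)
    (hkey : p'*q + q'*p = p*q + 1) (hgg : 2*g = p*q - p - q + 1)
    (hk0 : 0 ≤ k) (hkg : k ≤ g - 2) :
    ∑ s ∈ Finset.Ico (g+k+1) (2*g), chiG p q s = (gapAlpha p q (g+k) : ℤ) := by
  classical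
  have hg2 : 2 ≤ g := by omega
  have hset : {s : ℤ | 0 ≤ s ∧ s ∉ Spq p q ∧ g+k < s}
      = ↑((Finset.Ico (g+k+1) (2*g)).filter (fun s => s ∉ Spq p q)) := by
    ext s
    simp only [Set.mem_setOf_eq, Finset.coe_filter, Finset.mem_Ico]
    constructor
    · rintro ⟨h1, h2, h3⟩
      have h4 := gap_le p q p' q' hp hq hpq hkey s h1 h2
      exact ⟨⟨by omega, by linarith⟩, h2⟩
    · rintro ⟨⟨h1, h2⟩, h3⟩
      exact ⟨by omega, h3, by omega⟩
  unfold gapAlpha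
  rw [hset, Set.ncard_coe_finset, Finset.card_filter]
  push_cast
  refine Finset.sum_congr rfl (fun s hs => ?_)
  by_cases h : s ∈ Spq p q
  · rw [chiG_mem h, if_neg (fun hh => hh h)]
  · rw [chiG_not h, if_pos h]

lemma tail_zero (p q p' q' g : ℤ) (hp : 2 ≤ p) (hq : 2 ≤ q) (hpq : IsCoprime p q)
    (hkey : p'*q + q'*p = p*q + 1) (hgg : 2*g = p*q - p - q + 1) :
    ∑ s ∈ Finset.Ico (2*g) (p*q), chiG p q s = 0 := by
  refine Finset.sum_eq_zero (fun s hs => ?_)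
  simp only [Finset.mem_Ico] at hs
  have hg1 : 1 ≤ g := by nlinarith
  by_cases h : s ∈ Spq p q
  · exact chiG_mem h
  · exfalso
    have := gap_le p q p' q' hp hq hpq hkey s (by omega) h
    omega

/-- Symmetry of branch lengths for the graded root of `Σ(p,q,pqn-1)` (coprime `p,q ≥ 2`,
`n ≥ 1`), with `g = (p-1)(q-1)/2`, `M_i = pqi + 1`, `m_i = pqi - ⌊i/n⌋` and
`α_i = #{s ∉ S_{p,q} : s > i}`: for `0 ≤ k ≤ g-2` and `nk ≤ i < nk + n`,
`τ(M_{n(g-1)-1-i}) - τ(m_{n(g-1)-1-i}) = α_{g+k}` and `τ(M_{ng+i-1}) - τ(m_{ng+i}) = α_{g+k}`. -/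
theorem brieskornTau_branch_symmetry (p q n p' q' : ℤ) (hp : 2 ≤ p) (hq : 2 ≤ q)
    (hpq : IsCoprime p q) (hn : 1 ≤ n)
    (hp'0 : 0 < p') (hp'p : p' < p) (hq'0 : 0 < q') (hq'q : q' < q)
    (hp' : q * p' ≡ 1 [ZMOD p]) (hq' : p * q' ≡ 1 [ZMOD q])
    (g : ℤ) (hg : 2 * g = (p - 1) * (q - 1))
    (k : ℤ) (hk0 : 0 ≤ k) (hkg : k ≤ g - 2)
    (i : ℤ) (hi1 : n * k ≤ i) (hi2 : i < n * k + n) :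
    brieskornTau p q n p' q' (p * q * (n * (g - 1) - 1 - i) + 1)
        - brieskornTau p q n p' q'
            (p * q * (n * (g - 1) - 1 - i) - (n * (g - 1) - 1 - i) / n)
      = (gapAlpha p q (g + k) : ℤ) ∧
    brieskornTau p q n p' q' (p * q * (n * g + i - 1) + 1)
        - brieskornTau p q n p' q' (p * q * (n * g + i) - (n * g + i) / n)
      = (gapAlpha p q (g + k) : ℤ) := by
  have hp0 : (0:ℤ) < p := by omega
  have hq0 : (0:ℤ) < q := by omega
  have hn0 : (0:ℤ) < n := by omega
  have hkey := key_id p q p' q' hp hq hpq hp'0 hp'p hq'0 hq'q hp' hq'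
  have hgg : 2*g = p*q - p - q + 1 := by linear_combination hg
  have hg2 : 2 ≤ g := by omega
  have hpq4 : 4 ≤ p*q := by nlinarith
  have hr0 : (0:ℤ) < p*q*n - 1 := by
    nlinarith [mul_le_mul_of_nonneg_left hn (by positivity : (0:ℤ) ≤ p*q)]
  have hnk0 : 0 ≤ n*k := mul_nonneg (by omega) hk0
  have hi0 : 0 ≤ i := le_trans hnk0 hi1
  have hdiv1 : (n*(g-1) - 1 - i)/n = g - k - 2 := by
    rw [show n*(g-1)-1-i = (n*k + n - 1 - i) + n*(g-k-2) by ring,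
        Int.add_mul_ediv_left _ _ (by omega : n ≠ 0),
        Int.ediv_eq_zero_of_lt (by linarith) (by linarith)]
    ring
  have hdiv2 : (n*g + i)/n = g + k := by
    rw [show n*g + i = (i - n*k) + n*(g+k) by ring,
        Int.add_mul_ediv_left _ _ (by omega : n ≠ 0),
        Int.ediv_eq_zero_of_lt (by linarith) (by linarith)]
    ring
  set t1 := n*(g-1) - 1 - i with ht1
  set t2 := n*g + i with ht2
  have ht1e : t1 = n*g - n - 1 - i := by rw [ht1]; ring
  have hng2 : 2*n ≤ n*g := by nlinarith
  have ht2lb : 2 ≤ t2 := by rw [ht2]; linarith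
  have ht1lb : n*(g-k-2) ≤ t1 := by
    have e : n*(g-k-2) = n*g - n*k - 2*n := by ring
    linarith
  have hgk20 : 0 ≤ g - k - 2 := by omega
  have ht10 : 0 ≤ t1 := by
    have := mul_nonneg (by omega : (0:ℤ) ≤ n) hgk20
    linarith
  have hfact1 : g - k - 2 ≤ n*(g-k-2) := by nlinarith
  have h0a1 : 0 ≤ p*q*t1 - (g-k-2) := by
    nlinarith [mul_nonneg (by nlinarith : (0:ℤ) ≤ p*q - 1) ht10]
  -- part 1
  have key1 : brieskornTau p q n p' q' (p*q*t1 + 1)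
      - brieskornTau p q n p' q' (p*q*t1 - (g-k-2))
      = ∑ s ∈ Finset.Ico (0:ℤ) (g-k-1), chiS p q s := by
    rw [tau_diff p q n p' q' (p*q*t1 - (g-k-2)) (p*q*t1 + 1) h0a1 (by linarith)]
    rw [sum_reflect _ (p*q*t1) (p*q*t1 - (g-k-2)) (p*q*t1 + 1)]
    rw [show p*q*t1 - (p*q*t1 + 1) + 1 = 0 by ring,
        show p*q*t1 - (p*q*t1 - (g-k-2)) + 1 = g-k-1 by ring]
    refine Finset.sum_congr rfl (fun s hs => ?_)
    simp only [Finset.mem_Ico] at hs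
    show brieskornDelta p q n p' q' (p*q*t1 - s) = chiS p q s
    have hs0 : 0 ≤ s := hs.1
    have hsu : s ≤ g - k - 2 := by omega
    have hspq : s < p*q := by linarith
    have hsn : s*n ≤ (g-k-2)*n := mul_le_mul_of_nonneg_right hsu (by omega)
    have he0 : 0 ≤ t1 - s*n + 0*(p*q*n-1) := by
      have e : (g-k-2)*n = n*(g-k-2) := by ring
      linarith
    have he1 : t1 - s*n + 0*(p*q*n-1) < p*q*n-1 := by
      have h1 : 0 ≤ s*n := mul_nonneg hs0 (by omega)
      have h2 : n*g ≤ n*(p*q) := mul_le_mul_of_nonneg_left (by linarith) (by omega)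
      have e : n*(p*q) = p*q*n := by ring
      linarith
    rcases keyF p q p' q' hp hq hpq hkey s hs0 hspq with ⟨hmem, hV⟩ | ⟨hmem, hV⟩
    · rw [delta_eval p q n p' q' hp hq hn hkey t1 s 0 0 hV he0 he1, chiS_mem hmem]
      norm_num
    · rw [delta_eval p q n p' q' hp hq hn hkey t1 s 1 0 hV he0 he1, chiS_not hmem]
      norm_num
  have key1' : ∑ s ∈ Finset.Ico (0:ℤ) (g-k-1), chiS p q s
      = ∑ s ∈ Finset.Ico (g+k+1) (2*g), chiG p q s := by
    refine Finset.sum_nbij' (fun s => 2*g - 1 - s) (fun s => 2*g - 1 - s) ?_ ?_ ?_ ?_ ?_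
    · intro a ha; simp only [Finset.mem_Ico] at *; omega
    · intro a ha; simp only [Finset.mem_Ico] at *; omega
    · intro a ha; omega
    · intro a ha; omega
    · intro a ha
      simp only [Finset.mem_Ico] at ha
      show chiS p q a = chiG p q (2*g - 1 - a)
      have hsym := symm_gap p q p' q' hp hq hpq hkey a ha.1 (by linarith)
      rw [show p*q - p - q - a = 2*g - 1 - a by linarith] at hsym
      by_cases h : a ∈ Spq p q
      · rw [chiS_mem h, chiG_not (hsym.mp h)]
      · rw [chiS_not h, chiG_mem (not_not.mp (fun hc => h (hsym.mpr hc)))]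
  -- part 2
  have hab2 : p*q*(t2-1)+1 ≤ p*q*t2 - (g+k) := by
    have e : p*q*(t2-1) = p*q*t2 - p*q := by ring
    linarith
  have h0a2 : 0 ≤ p*q*(t2-1)+1 := by
    have : 0 ≤ p*q*(t2-1) := mul_nonneg (by positivity) (by linarith)
    linarith
  have key2 : brieskornTau p q n p' q' (p*q*(t2-1)+1)
      - brieskornTau p q n p' q' (p*q*t2 - (g+k))
      = ∑ s ∈ Finset.Ico (g+k+1) (p*q), chiG p q s := by
    have hd := tau_diff p q n p' q' (p*q*(t2-1)+1) (p*q*t2 - (g+k)) h0a2 hab2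
    have hsum : ∑ j ∈ Finset.Ico (p*q*(t2-1)+1) (p*q*t2 - (g+k)), brieskornDelta p q n p' q' j
        = -∑ s ∈ Finset.Ico (g+k+1) (p*q), chiG p q s := by
      rw [sum_reflect _ (p*q*t2) (p*q*(t2-1)+1) (p*q*t2 - (g+k)),
          show p*q*t2 - (p*q*t2 - (g+k)) + 1 = g+k+1 by ring,
          show p*q*t2 - (p*q*(t2-1)+1) + 1 = p*q by ring,
          ← Finset.sum_neg_distrib]
      refine Finset.sum_congr rfl (fun s hs => ?_)
      simp only [Finset.mem_Ico] at hs
      show brieskornDelta p q n p' q' (p*q*t2 - s) = -(chiG p q s)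
      have hs0 : 0 ≤ s := by omega
      have hspq : s < p*q := hs.2
      have hsl : g+k+1 ≤ s := hs.1
      have he0 : 0 ≤ t2 - s*n + 1*(p*q*n-1) := by
        have h1 : s*n ≤ (p*q-1)*n := mul_le_mul_of_nonneg_right (by omega) (by omega)
        have e : (p*q-1)*n = p*q*n - n := by ring
        linarith
      have he1 : t2 - s*n + 1*(p*q*n-1) < p*q*n-1 := by
        have h1 : (g+k+1)*n ≤ s*n := mul_le_mul_of_nonneg_right hsl (by omega)
        have e : (g+k+1)*n = n*g + n*k + n := by ring
        linarith
      rcases keyF p q p' q' hp hq hpq hkey s hs0 hspq with ⟨hmem, hV⟩ | ⟨hmem, hV⟩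
      · rw [delta_eval p q n p' q' hp hq hn hkey t2 s 0 1 hV he0 he1, chiG_mem hmem]
        norm_num
      · rw [delta_eval p q n p' q' hp hq hn hkey t2 s 1 1 hV he0 he1, chiG_not hmem]
        norm_num
    rw [hsum] at hd
    linarith
  constructor
  · rw [hdiv1, key1, key1', alpha_card p q p' q' g k hp hq hpq hkey hgg hk0 hkg]
  · rw [hdiv2]
    rw [show p * q * (t2 - 1) + 1 = p*q*(t2-1)+1 from rfl] at key2
    rw [key2, sum_Ico_split (chiG p q) (g+k+1) (2*g) (p*q) (by linarith) (by linarith),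
        tail_zero p q p' q' g hp hq hpq hkey hgg,
        alpha_card p q p' q' g k hp hq hpq hkey hgg hk0 hkg]
    ring
end

section
/- Let p,q ≥ 2 be coprime integers, n ≥ 1 an integer, and let τ be the tau function of Σ(p,q,pqn-1). Then τ(M_0) = 1, τ(M_{i+1}) - τ(M_i) = ⌊(i+1)/n⌋ + 1 - g for all 0 ≤ i ≤ N-3, and consequently τ(M_i) = 1 + Σ_{m=1}^{i} (⌊m/n⌋ + 1 - g) for all 1 ≤ i ≤ N-2. -/
/- ## Auxiliary lemmas -/

lemma ceil_int_div (a b : ℤ) (hb : 0 < b) : ⌈(a : ℚ) / (b : ℚ)⌉ = -((-a) / b) := by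
  have h1 : ⌈(a : ℚ) / (b : ℚ)⌉ = -⌊-((a : ℚ) / (b : ℚ))⌋ := by
    rw [Int.floor_neg]; ring
  have hbq : ((b : ℤ) : ℚ) = ((b.toNat : ℕ) : ℚ) := by
    exact_mod_cast (Int.toNat_of_nonneg hb.le).symm
  have h2 : -((a : ℚ) / (b : ℚ)) = ((-a : ℤ) : ℚ) / ((b.toNat : ℕ) : ℚ) := by
    rw [← hbq]; push_cast; ring
  rw [h1, h2, Rat.floor_intCast_div_natCast, Int.toNat_of_nonneg hb.le]

lemma delta_eq' (p q n p' q' j : ℤ) (hp : 0 < p) (hq : 0 < q) (hr : 0 < p * q * n - 1) :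
    brieskornDelta p q n p' q' j
      = 1 + 2 * j + ((-(j * p')) / p + (-(j * q')) / q
          + (-(j * (p * q * n - n - 1))) / (p * q * n - 1)) := by
  have h1 : ⌈(j * p' : ℚ) / (p : ℚ)⌉ = -((-(j * p')) / p) := by
    rw [show (j * p' : ℚ) = (((j * p' : ℤ)) : ℚ) by push_cast; ring]
    exact ceil_int_div _ _ hp
  have h2 : ⌈(j * q' : ℚ) / (q : ℚ)⌉ = -((-(j * q')) / q) := by
    rw [show (j * q' : ℚ) = (((j * q' : ℤ)) : ℚ) by push_cast; ring]
    exact ceil_int_div _ _ hq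
  have h3 : ⌈(j * (p * q * n - n - 1) : ℚ) / (p * q * n - 1 : ℚ)⌉
      = -((-(j * (p * q * n - n - 1))) / (p * q * n - 1)) := by
    rw [show (j * (p * q * n - n - 1) : ℚ) = (((j * (p * q * n - n - 1) : ℤ)) : ℚ) by
          push_cast; ring,
        show ((p : ℚ) * q * n - 1) = (((p * q * n - 1 : ℤ)) : ℚ) by push_cast; ring]
    exact ceil_int_div _ _ hr
  rw [brieskornDelta, h1, h2, h3]
  ring

lemma sum_if_le (K : ℤ) (hK : 0 ≤ K) :
    ∀ m : ℕ, (∑ t ∈ Finset.range m, (if K ≤ (t : ℤ) then (1:ℤ) else 0))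
      = max ((m : ℤ) - K) 0 := by
  intro m
  induction m with
  | zero => simp; omega
  | succ m ih =>
    rw [Finset.sum_range_succ, ih]
    split_ifs with h
    · push_cast; omega
    · push_cast at h ⊢; omega

lemma gauss (m : ℕ) : 2 * (∑ t ∈ Finset.range m, (t : ℤ)) = (m : ℤ) * ((m : ℤ) - 1) := by
  induction m with
  | zero => simp
  | succ k ih =>
    rw [Finset.sum_range_succ, mul_add]
    push_cast
    push_cast at ih
    linarith

lemma block_shift (f : ℤ → ℤ) (m : ℕ) (hf : ∀ x : ℤ, f (x + m) = f x) :
    ∀ a : ℤ, (∑ t ∈ Finset.range m, f (a + t)) = ∑ t ∈ Finset.range m, f t := by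
  have step : ∀ a : ℤ, (∑ t ∈ Finset.range m, f ((a + 1) + t)) = ∑ t ∈ Finset.range m, f (a + t) := by
    intro a
    cases m with
    | zero => simp
    | succ mm =>
      rw [Finset.sum_range_succ, Finset.sum_range_succ']
      have h2 : f (a + 1 + (mm : ℤ)) = f (a + 0) := by
        rw [show a + 1 + (mm : ℤ) = a + ((mm + 1 : ℕ) : ℤ) by push_cast; ring, hf a]
        simp
      rw [h2]
      congr 1
      apply Finset.sum_congr rfl
      intro t _
      congr 1; push_cast; ring
  intro a
  induction a using Int.induction_on with
  | zero => simp
  | succ k ih => rw [step]; exact ih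
  | pred k ih =>
      have h := step (-(k : ℤ) - 1)
      rw [show -(k : ℤ) - 1 + 1 = -(k : ℤ) by ring] at h
      rw [← h]
      exact ih

lemma block_mul (f : ℤ → ℤ) (m : ℕ) (hf : ∀ x : ℤ, f (x + m) = f x) (k : ℕ) (a : ℤ) :
    (∑ t ∈ Finset.range (k * m), f (a + t)) = k * ∑ t ∈ Finset.range m, f t := by
  induction k with
  | zero => simp
  | succ k ih =>
    rw [show (k + 1) * m = k * m + m from by ring, Finset.sum_range_add, ih]
    have : (∑ x ∈ Finset.range m, f (a + (k * m + x : ℕ))) = ∑ t ∈ Finset.range m, f t := by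
      rw [← block_shift f m hf (a + (k * m : ℕ))]
      apply Finset.sum_congr rfl
      intro t _
      congr 1; push_cast; ring
    rw [this]; push_cast; ring

lemma resid_sum (m c u : ℤ) (hm : 0 < m) (hcu : c * u ≡ 1 [ZMOD m]) :
    (∑ t ∈ Finset.range m.toNat, (((t : ℤ) * c) % m)) = ∑ t ∈ Finset.range m.toNat, (t : ℤ) := by
  have huc : u * c ≡ 1 [ZMOD m] := by rwa [mul_comm] at hcu
  have key : ∀ (v w : ℤ), v * w ≡ 1 [ZMOD m] → ∀ t : ℕ, t ∈ Finset.range m.toNat →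
      ((((t : ℤ) * v) % m) * w) % m = (t : ℤ) := by
    intro v w hvw t ht
    have ht' : (t : ℤ) < m := by
      have := Finset.mem_range.mp ht
      omega
    have h1 : (((t : ℤ) * v) % m) * w ≡ ((t : ℤ) * v) * w [ZMOD m] :=
      (Int.mod_modEq ((t : ℤ) * v) m).mul_right w
    have h2 : ((t : ℤ) * v) * w ≡ (t : ℤ) * 1 [ZMOD m] := by
      rw [mul_assoc]
      exact Int.ModEq.mul_left _ hvw
    have h3 := h1.trans h2
    rw [mul_one] at h3
    have h4 := h3.eq
    rwa [Int.emod_eq_of_lt (by positivity) ht'] at h4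
  have mem : ∀ (v : ℤ) (t : ℕ), t ∈ Finset.range m.toNat →
      (((t : ℤ) * v) % m).toNat ∈ Finset.range m.toNat := by
    intro v t _
    simp only [Finset.mem_range]
    have h1 : 0 ≤ ((t : ℤ) * v) % m := Int.emod_nonneg _ hm.ne'
    have h2 : ((t : ℤ) * v) % m < m := Int.emod_lt_of_pos _ hm
    omega
  have inv : ∀ (v w : ℤ), v * w ≡ 1 [ZMOD m] → ∀ t : ℕ, t ∈ Finset.range m.toNat →
      (((((t : ℤ) * v) % m).toNat : ℤ) * w % m).toNat = t := by
    intro v w hvw t ht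
    have h1 : 0 ≤ ((t : ℤ) * v) % m := Int.emod_nonneg _ hm.ne'
    rw [Int.toNat_of_nonneg h1, key v w hvw t ht]
    exact Int.toNat_natCast t
  refine Finset.sum_nbij' (fun t => (((t : ℤ) * c) % m).toNat)
      (fun t => (((t : ℤ) * u) % m).toNat) (mem c) (mem u) ?_ ?_ ?_
  · exact inv c u hcu
  · exact inv u c huc
  · intro t _
    exact (Int.toNat_of_nonneg (Int.emod_nonneg _ hm.ne')).symm

lemma floor_block (m c u a : ℤ) (hm : 0 < m) (hcu : c * u ≡ 1 [ZMOD m]) (k : ℕ) :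
    m * (∑ t ∈ Finset.range (k * m.toNat), ((a + t) * c / m))
      = c * (∑ t ∈ Finset.range (k * m.toNat), (a + t))
        - k * (∑ t ∈ Finset.range m.toNat, (t : ℤ)) := by
  have hper : ∀ x : ℤ, ((x + ((m.toNat : ℕ) : ℤ)) * c) % m = (x * c) % m := by
    intro x
    rw [Int.toNat_of_nonneg hm.le, show (x + m) * c = x * c + m * c by ring,
      Int.add_mul_emod_self_left]
  have hres : (∑ t ∈ Finset.range (k * m.toNat), ((a + t) * c % m))
      = k * ∑ t ∈ Finset.range m.toNat, (t : ℤ) := by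
    have hb := block_mul (fun x => (x * c) % m) m.toNat hper k a
    rw [hb]
    congr 1
    exact resid_sum m c u hm hcu
  have hdiv : ∀ x : ℤ, m * (x / m) = x - x % m := fun x => by
    rw [Int.emod_def]; ring
  rw [Finset.mul_sum]
  simp only [hdiv]
  rw [Finset.sum_sub_distrib, hres, ← Finset.sum_mul]
  ring

lemma delta_block (p q n p' q' g i : ℤ) (hp : 2 ≤ p) (hq : 2 ≤ q) (hn : 1 ≤ n)
    (hp' : q * p' ≡ 1 [ZMOD p]) (hq' : p * q' ≡ 1 [ZMOD q])
    (he6 : q * p' + p * q' = p * q + 1)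
    (hg : 2 * g = (p - 1) * (q - 1))
    (hi0 : 0 ≤ i) (hi1 : i ≤ n * (2 * g - 1) - 3) :
    (∑ t ∈ Finset.range (q.toNat * p.toNat),
        brieskornDelta p q n p' q' (p * q * i + 1 + (t : ℤ)))
      = (i + 1) / n + 1 - g := by
  have hp0 : (0:ℤ) < p := by omega
  have hq0 : (0:ℤ) < q := by omega
  have hn0 : (0:ℤ) < n := by omega
  have hr0 : (0:ℤ) < p * q * n - 1 := by nlinarith
  have delta_eq : ∀ j : ℤ, brieskornDelta p q n p' q' j
      = 1 + 2 * j + ((-(j * p')) / p + (-(j * q')) / q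
          + (-(j * (p * q * n - n - 1))) / (p * q * n - 1)) :=
    fun j => delta_eq' p q n p' q' j hp0 hq0 hr0
  set M : ℕ := q.toNat * p.toNat with hMdef
  have hM : ((M : ℕ) : ℤ) = p * q := by
    rw [hMdef]; push_cast [Int.toNat_of_nonneg hp0.le, Int.toNat_of_nonneg hq0.le]; ring
  set r : ℤ := p * q * n - 1 with hrdef
  set a : ℤ := p * q * i + 1 with hadef
  set F : ℤ := (i + 1) / n with hFdef
  have hF0 : 0 ≤ F := by rw [hFdef]; exact Int.ediv_nonneg (by omega) hn0.le
  have hFn : F * n ≤ i + 1 := by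
    rw [hFdef]
    have := Int.mul_ediv_add_emod (i + 1) n
    have h1 := Int.emod_nonneg (i + 1) hn0.ne'
    nlinarith [this, h1]
  have hg' : 2 * g - 1 = p * q - p - q := by linarith
  have hFpq : F ≤ p * q - 5 := by
    have h1 : F * n ≤ n * (p * q - p - q) - 2 := by
      calc F * n ≤ i + 1 := hFn
        _ ≤ n * (2 * g - 1) - 2 := by omega
        _ = n * (p * q - p - q) - 2 := by rw [hg']
    have h2 : F < p * q - p - q := by nlinarith
    omega
  have hir : i + 1 < r := by rw [hrdef]; nlinarith [hg']
  set G : ℤ := ∑ t ∈ Finset.range M, (t : ℤ) with hGdef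
  set Gp : ℤ := ∑ t ∈ Finset.range p.toNat, (t : ℤ) with hGpdef
  set Gq : ℤ := ∑ t ∈ Finset.range q.toNat, (t : ℤ) with hGqdef
  set SJ : ℤ := ∑ t ∈ Finset.range M, (a + (t : ℤ)) with hSJdef
  set Dp : ℤ := ∑ t ∈ Finset.range M, ((a + (t : ℤ)) * (-p') / p) with hDpdef
  set Dq : ℤ := ∑ t ∈ Finset.range M, ((a + (t : ℤ)) * (-q') / q) with hDqdef
  set SDn : ℤ := ∑ t ∈ Finset.range M, ((a + (t : ℤ)) * n / r) with hSDndef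
  have hSJ : SJ = p * q * a + G := by
    rw [hSJdef, hGdef, Finset.sum_add_distrib, Finset.sum_const, Finset.card_range,
      nsmul_eq_mul, hM]
  have hG : 2 * G = (p * q) * (p * q - 1) := by rw [hGdef, gauss, hM]
  have hGp : 2 * Gp = p * (p - 1) := by
    rw [hGpdef, gauss, Int.toNat_of_nonneg hp0.le]
  have hGq : 2 * Gq = q * (q - 1) := by
    rw [hGqdef, gauss, Int.toNat_of_nonneg hq0.le]
  have hE1 : p * Dp = -p' * SJ - q * Gp := by
    have hcop : (-p') * (-q) ≡ 1 [ZMOD p] := by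
      rw [show (-p') * (-q) = q * p' by ring]; exact hp'
    have := floor_block p (-p') (-q) a hp0 hcop q.toNat
    rw [Int.toNat_of_nonneg hq0.le] at this
    exact this
  have hE2 : q * Dq = -q' * SJ - p * Gq := by
    have hcop : (-q') * (-p) ≡ 1 [ZMOD q] := by
      rw [show (-q') * (-p) = p * q' by ring]; exact hq'
    have h := floor_block q (-q') (-p) a hq0 hcop p.toNat
    rw [Int.toNat_of_nonneg hp0.le, Nat.mul_comm p.toNat q.toNat] at h
    exact h
  have hK0 : 0 ≤ p * q - 1 - F := by omega
  have hstep : ∀ t ∈ Finset.range M, (a + (t : ℤ)) * n / r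
      = i + (if p * q - 1 - F ≤ (t : ℤ) then (1:ℤ) else 0) := by
    intro t ht
    have htM : (t : ℤ) ≤ p * q - 1 := by
      have h1 := Finset.mem_range.mp ht
      have h2 : ((t : ℕ) : ℤ) < ((M : ℕ) : ℤ) := by exact_mod_cast h1
      omega
    have ht0 : (0:ℤ) ≤ (t : ℤ) := Int.natCast_nonneg t
    have hx0 : (0:ℤ) ≤ i + ((t : ℤ) + 1) * n := by
      have h5 : (0:ℤ) ≤ ((t : ℤ) + 1) * n := by positivity
      linarith
    have hle : ((t : ℤ) + 1) * n ≤ p * q * n :=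
      mul_le_mul_of_nonneg_right (by omega) hn0.le
    have hx2 : i + ((t : ℤ) + 1) * n < 2 * r := by
      rw [hrdef]
      linarith [hle, hir, hrdef.le, hrdef.ge]
    have hrw : (a + (t : ℤ)) * n = (i + ((t : ℤ) + 1) * n) + i * r := by
      rw [hadef, hrdef]; ring
    rw [hrw, Int.add_mul_ediv_right _ _ hr0.ne']
    by_cases hc : r ≤ i + ((t : ℤ) + 1) * n
    · have h1 : (i + ((t : ℤ) + 1) * n) / r = 1 := by
        rw [show i + ((t : ℤ) + 1) * n = (i + ((t : ℤ) + 1) * n - r) + 1 * r by ring,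
          Int.add_mul_ediv_right _ _ hr0.ne',
          Int.ediv_eq_zero_of_lt (by omega) (by omega)]
        norm_num
      have h2 : p * q - 1 - F ≤ (t : ℤ) := by
        have h3 : (p * q - 1 - (t : ℤ)) * n ≤ i + 1 := by
          rw [hrdef] at hc; linarith
        have h4 : p * q - 1 - (t : ℤ) ≤ F := by
          rw [hFdef]
          exact (Int.le_ediv_iff_mul_le hn0).mpr h3
        omega
      rw [h1, if_pos h2]; ring
    · have h1 : (i + ((t : ℤ) + 1) * n) / r = 0 :=
        Int.ediv_eq_zero_of_lt hx0 (not_le.mp hc)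
      have h2 : ¬ (p * q - 1 - F ≤ (t : ℤ)) := by
        intro h3
        have h4 : (p * q - 1 - (t : ℤ)) * n ≤ F * n := by
          apply mul_le_mul_of_nonneg_right _ hn0.le
          omega
        rw [hrdef] at hc
        linarith [hFn]
      rw [h1, if_neg h2]; ring
  have hE4 : SDn = p * q * i + F + 1 := by
    rw [hSDndef, Finset.sum_congr rfl hstep, Finset.sum_add_distrib, Finset.sum_const,
      Finset.card_range, nsmul_eq_mul, hM, sum_if_le _ hK0, hM]
    have : max (p * q - (p * q - 1 - F)) 0 = F + 1 := by omega
    rw [this]; ring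
  have hterm : ∀ t ∈ Finset.range M, brieskornDelta p q n p' q' (a + (t : ℤ))
      = 1 + 2 * (a + (t : ℤ)) + ((a + (t : ℤ)) * (-p') / p + (a + (t : ℤ)) * (-q') / q
          + ((a + (t : ℤ)) * n / r - (a + (t : ℤ)))) := by
    intro t _
    rw [delta_eq (a + (t : ℤ))]
    have e1 : -((a + (t : ℤ)) * p') = (a + (t : ℤ)) * (-p') := by ring
    have e2 : -((a + (t : ℤ)) * q') = (a + (t : ℤ)) * (-q') := by ring
    have e3 : -((a + (t : ℤ)) * (p * q * n - n - 1))
        = (a + (t : ℤ)) * n + (-(a + (t : ℤ))) * r := by rw [hrdef]; ring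
    rw [e1, e2, e3, Int.add_mul_ediv_right _ _ hr0.ne']
    ring
  have hgoal : (∑ t ∈ Finset.range M, brieskornDelta p q n p' q' (a + (t : ℤ)))
      = (M : ℤ) + 2 * SJ + (Dp + Dq + (SDn - SJ)) := by
    rw [Finset.sum_congr rfl hterm, hSJdef, hDpdef, hDqdef, hSDndef]
    rw [Finset.sum_add_distrib, Finset.sum_add_distrib, Finset.sum_add_distrib,
      Finset.sum_add_distrib, Finset.sum_sub_distrib, Finset.sum_const, Finset.card_range,
      nsmul_eq_mul, mul_one, ← Finset.mul_sum]
  rw [hgoal]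
  have h2pq : (2 * (p * q)) ≠ 0 := by positivity
  apply mul_left_cancel₀ h2pq
  rw [hM]
  linear_combination (2*q)*hE1 + (2*p)*hE2 + (2*p*q)*hE4 - 2*hSJ - 2*p*q*hadef
    - hG - q^2*hGp - p^2*hGq - 2*SJ*he6 + p*q*hg

lemma key_e6 (p q p' q' : ℤ) (hp : 2 ≤ p) (hq : 2 ≤ q) (hpq : IsCoprime p q)
    (hp'0 : 0 < p') (hp'p : p' < p) (hq'0 : 0 < q') (hq'q : q' < q)
    (hp' : q * p' ≡ 1 [ZMOD p]) (hq' : p * q' ≡ 1 [ZMOD q]) :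
    q * p' + p * q' = p * q + 1 := by
  obtain ⟨k, hk⟩ := hp'.dvd
  obtain ⟨l, hl⟩ := hq'.dvd
  have d1 : p ∣ (q * p' + p * q' - (p * q + 1)) := ⟨-k + q' - q, by linear_combination -hk⟩
  have d2 : q ∣ (q * p' + p * q' - (p * q + 1)) := ⟨-l + p' - p, by linear_combination -hl⟩
  obtain ⟨c, hc⟩ := hpq.mul_dvd d1 d2
  have e1 : q * p' ≤ q * (p - 1) := mul_le_mul_of_nonneg_left (by omega) (by omega)
  have e2 : p * q' ≤ p * (q - 1) := mul_le_mul_of_nonneg_left (by omega) (by omega)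
  have e3 : q * 1 ≤ q * p' := mul_le_mul_of_nonneg_left (by omega) (by omega)
  have e4 : p * 1 ≤ p * q' := mul_le_mul_of_nonneg_left (by omega) (by omega)
  have hpq4 : (4:ℤ) ≤ p * q := by nlinarith
  have hc1 : c < 1 := by
    by_contra h
    push_neg at h
    have h5 : p * q * 1 ≤ p * q * c := mul_le_mul_of_nonneg_left h (by positivity)
    nlinarith
  have hc2 : -1 < c := by
    by_contra h
    push_neg at h
    have h5 : p * q * c ≤ p * q * (-1) := mul_le_mul_of_nonneg_left h (by positivity)
    nlinarith
  have hc0 : c = 0 := by omega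
  rw [hc0, mul_zero] at hc
  linarith

/-- For the tau function `τ` of `Σ(p,q,pqn-1)` (coprime `p,q ≥ 2`, `n ≥ 1`), with
`g = (p-1)(q-1)/2`, `N = n(2g-1)` and `M_i = pqi + 1`: `τ(M_0) = 1`,
`τ(M_{i+1}) - τ(M_i) = ⌊(i+1)/n⌋ + 1 - g` for `0 ≤ i ≤ N-3`, and consequently
`τ(M_i) = 1 + Σ_{m=1}^{i} (⌊m/n⌋ + 1 - g)` for `1 ≤ i ≤ N-2`. -/
theorem brieskornTau_at_maxima (p q n p' q' : ℤ) (hp : 2 ≤ p) (hq : 2 ≤ q)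
    (hpq : IsCoprime p q) (hn : 1 ≤ n)
    (hp'0 : 0 < p') (hp'p : p' < p) (hq'0 : 0 < q') (hq'q : q' < q)
    (hp' : q * p' ≡ 1 [ZMOD p]) (hq' : p * q' ≡ 1 [ZMOD q])
    (g : ℤ) (hg : 2 * g = (p - 1) * (q - 1)) :
    brieskornTau p q n p' q' 1 = 1 ∧
    (∀ i : ℤ, 0 ≤ i → i ≤ n * (2 * g - 1) - 3 →
      brieskornTau p q n p' q' (p * q * (i + 1) + 1)
          - brieskornTau p q n p' q' (p * q * i + 1)
        = (i + 1) / n + 1 - g) ∧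
    (∀ i : ℤ, 1 ≤ i → i ≤ n * (2 * g - 1) - 2 →
      brieskornTau p q n p' q' (p * q * i + 1)
        = 1 + ∑ m ∈ Finset.Icc 1 i.toNat, ((m : ℤ) / n + 1 - g)) := by
  have hp0 : (0:ℤ) < p := by omega
  have hq0 : (0:ℤ) < q := by omega
  have he6 : q * p' + p * q' = p * q + 1 :=
    key_e6 p q p' q' hp hq hpq hp'0 hp'p hq'0 hq'q hp' hq'
  have part1 : brieskornTau p q n p' q' 1 = 1 := by
    rw [brieskornTau]
    norm_num [brieskornDelta]
  have part2 : ∀ i : ℤ, 0 ≤ i → i ≤ n * (2 * g - 1) - 3 →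
      brieskornTau p q n p' q' (p * q * (i + 1) + 1)
          - brieskornTau p q n p' q' (p * q * i + 1)
        = (i + 1) / n + 1 - g := by
    intro i hi0 hi1
    have hK1 : (0:ℤ) ≤ p * q * i + 1 := by positivity
    have htn : (p * q * (i + 1) + 1).toNat
        = (p * q * i + 1).toNat + q.toNat * p.toNat := by
      have h1 : (0:ℤ) ≤ p * q * (i + 1) + 1 := by positivity
      have h2 : (((p * q * i + 1).toNat + q.toNat * p.toNat : ℕ) : ℤ)
          = p * q * (i + 1) + 1 := by
        push_cast [Int.toNat_of_nonneg hK1, Int.toNat_of_nonneg hp0.le,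
          Int.toNat_of_nonneg hq0.le]
        ring
      omega
    rw [brieskornTau, brieskornTau, htn, Finset.sum_range_add]
    have hcongr : ∀ x ∈ Finset.range (q.toNat * p.toNat),
        brieskornDelta p q n p' q' (((p * q * i + 1).toNat + x : ℕ) : ℤ)
          = brieskornDelta p q n p' q' (p * q * i + 1 + (x : ℤ)) := by
      intro x _
      congr 1
      push_cast [Int.toNat_of_nonneg hK1]
      ring
    rw [Finset.sum_congr rfl hcongr]
    rw [delta_block p q n p' q' g i hp hq hn hp' hq' he6 hg hi0 hi1]
    ring
  refine ⟨part1, part2, ?_⟩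
  have part3 : ∀ k : ℕ, 1 ≤ k → (k : ℤ) ≤ n * (2 * g - 1) - 2 →
      brieskornTau p q n p' q' (p * q * (k : ℤ) + 1)
        = 1 + ∑ m ∈ Finset.Icc 1 k, ((m : ℤ) / n + 1 - g) := by
    intro k
    induction k with
    | zero => intro h; omega
    | succ k ih =>
      intro _ hk2
      by_cases hk : k = 0
      · subst hk
        have h2 := part2 0 le_rfl (by push_cast at hk2; omega)
        norm_num at h2
        rw [show ((0:ℕ) + 1 : ℕ) = 1 from rfl]
        push_cast
        rw [show Finset.Icc 1 1 = {1} from rfl, Finset.sum_singleton]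
        push_cast
        rw [show p * q * 1 + 1 = p * q + 1 by ring]
        linarith [h2, part1]
      · have hk1 : 1 ≤ k := by omega
        have hk2' : (k : ℤ) ≤ n * (2 * g - 1) - 2 := by push_cast at hk2 ⊢; omega
        have ihv := ih hk1 hk2'
        have h2 := part2 (k : ℤ) (by positivity) (by push_cast at hk2; omega)
        rw [Finset.sum_Icc_succ_top (by omega : 1 ≤ k + 1)]
        push_cast
        push_cast at ihv h2
        linarith [ihv, h2]
  intro i hi1 hi2
  have hit : ((i.toNat : ℕ) : ℤ) = i := Int.toNat_of_nonneg (by omega)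
  have := part3 i.toNat (by omega) (by omega)
  rwa [hit] at this
end
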